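/- In the setting above, with φ(x_i) = φ_i and empirical covariance Σ̂ := n^{-1} Σ_{i=1}^n φ(x_i) ⊗ φ(x_i), one has E_x (y(x) − f_KR(x))² ≤ ∥w̄∥² ∥Σ − Σ̂∥, where ∥·∥ is the operator norm. -/

import Mathlib

open MeasureTheory

/-- Noiseless generalization of kernel regression reduces to covariance concentration:
if `φ_i = φ(x_i)` and `Σ̂ = n⁻¹ Σ_i φ(x_i)⊗φ(x_i)`, then
`E_x (y − f_KR)² ≤ ∥w̄∥² ∥Σ − Σ̂∥` in operator norm. -/
theorem kernel_regression_generalization_covariance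
    {H : Type*} [NormedAddCommGroup H] [InnerProductSpace ℝ H] [CompleteSpace H]
    {Ω : Type*} [MeasurableSpace Ω] (μ : Measure Ω) [IsProbabilityMeasure μ]
    (n : ℕ) (φs : Fin n → H) (φ : Ω → H) (xs : Fin n → Ω)
    (hφs : ∀ i, φs i = φ (xs i)) (wbar : H)
    (P : H →L[ℝ] H)
    (hPmem : ∀ v, P v ∈ Submodule.span ℝ (Set.range φs))
    (hPfix : ∀ v ∈ Submodule.span ℝ (Set.range φs), P v = v)
    (hPsa : ∀ u v : H, (inner ℝ (P u) v : ℝ) = inner ℝ u (P v))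
    (Sop : H →L[ℝ] H)
    (hSop : ∀ u v : H, (inner ℝ u (Sop v) : ℝ) =
        ∫ ω, (inner ℝ (φ ω) u : ℝ) * (inner ℝ (φ ω) v : ℝ) ∂μ)
    (hint : ∀ u v : H,
        Integrable (fun ω => (inner ℝ (φ ω) u : ℝ) * (inner ℝ (φ ω) v : ℝ)) μ)
    (Shat : H →L[ℝ] H)
    (hShat : ∀ v : H, Shat v = (n : ℝ)⁻¹ • ∑ i, (inner ℝ (φs i) v : ℝ) • φs i) :
    (∫ ω, ((inner ℝ (φ ω) wbar : ℝ) - (inner ℝ (φ ω) (P wbar) : ℝ)) ^ 2 ∂μ)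
      ≤ ‖wbar‖ ^ 2 * ‖Sop - Shat‖ := by
  set u : H := wbar - P wbar with hu
  have hmem : ∀ i, φs i ∈ Submodule.span ℝ (Set.range φs) := fun i =>
    Submodule.subset_span ⟨i, rfl⟩
  have hkey : ∀ i, (inner ℝ (φs i) u : ℝ) = 0 := by
    intro i
    have : (inner ℝ (φs i) (P wbar) : ℝ) = inner ℝ (φs i) wbar := by
      rw [← hPsa, hPfix _ (hmem i)]
    simp [hu, inner_sub_right, this]
  have hShatu : Shat u = 0 := by
    rw [hShat]
    simp [hkey]
  have hPu : P u = 0 := by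
    have : P (P wbar) = P wbar := hPfix _ (hPmem wbar)
    simp [hu, map_sub, this]
  have hortho : (inner ℝ (P wbar) u : ℝ) = 0 := by
    rw [hPsa, hPu, inner_zero_right]
  have hnormu : ‖u‖ ≤ ‖wbar‖ := by
    have hsq : ‖wbar‖ ^ 2 = ‖P wbar‖ ^ 2 + ‖u‖ ^ 2 := by
      have h1 := norm_add_sq_real (P wbar) u
      rw [hortho] at h1
      have h2 : P wbar + u = wbar := by simp [hu]
      rw [h2] at h1
      linarith
    nlinarith [norm_nonneg u, norm_nonneg wbar, norm_nonneg (P wbar), sq_nonneg (‖P wbar‖)]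
  have hinteg : ∀ ω, ((inner ℝ (φ ω) wbar : ℝ) - (inner ℝ (φ ω) (P wbar) : ℝ)) ^ 2
      = (inner ℝ (φ ω) u : ℝ) * (inner ℝ (φ ω) u : ℝ) := by
    intro ω
    simp [hu, inner_sub_right, sq]
  calc (∫ ω, ((inner ℝ (φ ω) wbar : ℝ) - (inner ℝ (φ ω) (P wbar) : ℝ)) ^ 2 ∂μ)
      = ∫ ω, (inner ℝ (φ ω) u : ℝ) * (inner ℝ (φ ω) u : ℝ) ∂μ := by
        simp_rw [hinteg]
    _ = (inner ℝ u (Sop u) : ℝ) := (hSop u u).symm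
    _ = (inner ℝ u ((Sop - Shat) u) : ℝ) := by
        simp [hShatu]
    _ ≤ ‖u‖ * ‖(Sop - Shat) u‖ := real_inner_le_norm _ _
    _ ≤ ‖u‖ * (‖Sop - Shat‖ * ‖u‖) := by
        gcongr
        exact (Sop - Shat).le_opNorm u
    _ ≤ ‖wbar‖ * (‖Sop - Shat‖ * ‖wbar‖) := by
        have h0 : (0:ℝ) ≤ ‖Sop - Shat‖ := norm_nonneg _
        have h1 : ‖u‖ * ‖u‖ ≤ ‖wbar‖ * ‖wbar‖ :=
          mul_le_mul hnormu hnormu (norm_nonneg u) (norm_nonneg wbar)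
        nlinarith [mul_le_mul_of_nonneg_left h1 h0]
    _ = ‖wbar‖ ^ 2 * ‖Sop - Shat‖ := by ring
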